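/- Packing of the first stopping condition: let W be a d×d matrix weight on J = [0,1) with ⟨W⟩_J invertible, let C₁ > 0, and let {L} be a collection of pairwise disjoint dyadic subintervals of J such that ‖⟨W⟩_L^{1/2} ⟨W⟩_J^{-1/2}‖ > C₁ for every L in the collection (operator norm). Then Σ_L |L| ≤ (d / C₁²) · |J|. In particular, if C₁² ≥ 4d, then Σ_L |L| ≤ |J|/4. -/

import Mathlib

open MeasureTheory Matrix Set ENNReal Filter
open scoped ComplexOrder

noncomputable section

/-- The dyadic interval `[k/2^n, (k+1)/2^n)`. -/
def dyadicI (n k : ℕ) : Set ℝ := Set.Ico ((k : ℝ) / 2 ^ n) (((k : ℝ) + 1) / 2 ^ n)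

/-- `I` is a dyadic subinterval of `J = [0,1)`. -/
def IsDyadic (I : Set ℝ) : Prop := ∃ n k : ℕ, k < 2 ^ n ∧ I = dyadicI n k

/-- The length (Lebesgue measure) of a set, as a real number. -/
def len (I : Set ℝ) : ℝ := (volume I).toReal

/-- The `L²`-normalized Haar function of an interval `I = [a, b)`:
`h_I = |I|^{-1/2} (χ_{I_+} - χ_{I_-})`. -/
def haar (I : Set ℝ) (x : ℝ) : ℝ :=
  (Real.sqrt (len I))⁻¹ *
    ((Set.Ico ((sInf I + sSup I) / 2) (sSup I)).indicator (fun _ => (1 : ℝ)) x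
      - (Set.Ico (sInf I) ((sInf I + sSup I) / 2)).indicator (fun _ => (1 : ℝ)) x)

/-- The Haar coefficient `(f, h_I) = ∫_J f h_I ∈ ℂ^d` of a vector-valued function. -/
def haarCoef {d : ℕ} (f : ℝ → Fin d → ℂ) (I : Set ℝ) : Fin d → ℂ :=
  ∫ x in Set.Ico (0 : ℝ) 1, haar I x • f x

/-- The Euclidean norm on `ℂ^d`. -/
def vnorm {d : ℕ} (v : Fin d → ℂ) : ℝ := Real.sqrt (∑ i, ‖v i‖ ^ 2)

/-- The (real) quadratic form `⟨M v, v⟩` of a matrix. -/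
def qf {d : ℕ} (M : Matrix (Fin d) (Fin d) ℂ) (v : Fin d → ℂ) : ℝ :=
  (star v ⬝ᵥ M.mulVec v).re

/-- The entrywise average `⟨W⟩_I = |I|⁻¹ ∫_I W` of a matrix-valued function. -/
def mavg {d : ℕ} (W : ℝ → Matrix (Fin d) (Fin d) ℂ) (I : Set ℝ) :
    Matrix (Fin d) (Fin d) ℂ :=
  Matrix.of fun i j => (len I : ℂ)⁻¹ * ∫ x in I, W x i j

open scoped Classical in
/-- The positive semidefinite square root of a positive semidefinite matrix
(junk value `0` otherwise). -/
def msqrt {d : ℕ} (M : Matrix (Fin d) (Fin d) ℂ) : Matrix (Fin d) (Fin d) ℂ :=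
  if h : M.PosSemidef then
    (h.1.eigenvectorUnitary : Matrix (Fin d) (Fin d) ℂ) *
      Matrix.diagonal (((↑) : ℝ → ℂ) ∘ Real.sqrt ∘ h.1.eigenvalues) *
      (star h.1.eigenvectorUnitary : Matrix (Fin d) (Fin d) ℂ)
  else 0

lemma msqrt_spec {d : ℕ} {M : Matrix (Fin d) (Fin d) ℂ} (h : M.PosSemidef) :
    (msqrt M).PosSemidef ∧ msqrt M * msqrt M = M := by
  classical
  set U : Matrix (Fin d) (Fin d) ℂ := (h.1.eigenvectorUnitary : Matrix (Fin d) (Fin d) ℂ)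
    with hU
  have hUU : star U * U = 1 := Unitary.coe_star_mul_self _
  have hS : msqrt M = U * Matrix.diagonal (((↑) : ℝ → ℂ) ∘ Real.sqrt ∘ h.1.eigenvalues) *
      star U := by
    rw [msqrt, dif_pos h]
  constructor
  · rw [hS, star_eq_conjTranspose]
    apply PosSemidef.mul_mul_conjTranspose_same
    rw [posSemidef_diagonal_iff]
    intro i
    simp [Complex.zero_le_real, Real.sqrt_nonneg]
  · rw [hS]
    conv_rhs => rw [h.1.spectral_theorem]
    rw [Unitary.conjStarAlgAut_apply]
    calc U * Matrix.diagonal (((↑) : ℝ → ℂ) ∘ Real.sqrt ∘ h.1.eigenvalues) * star U *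
          (U * Matrix.diagonal (((↑) : ℝ → ℂ) ∘ Real.sqrt ∘ h.1.eigenvalues) * star U)
        = U * (Matrix.diagonal (((↑) : ℝ → ℂ) ∘ Real.sqrt ∘ h.1.eigenvalues) * (star U * U) *
          Matrix.diagonal (((↑) : ℝ → ℂ) ∘ Real.sqrt ∘ h.1.eigenvalues)) * star U := by
          simp only [Matrix.mul_assoc]
      _ = _ := by
          rw [hUU, Matrix.mul_one, diagonal_mul_diagonal]
          congr 3
          ext i
          simp only [Function.comp_apply]
          rw [← Complex.ofReal_mul, Real.mul_self_sqrt (h.eigenvalues_nonneg i)]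
          rfl

/-- The operator norm of a matrix acting on the Euclidean space `ℂ^d`. -/
def opNorm {d : ℕ} (M : Matrix (Fin d) (Fin d) ℂ) : ℝ :=
  ‖Matrix.toEuclideanCLM (𝕜 := ℂ) M‖

/-- A `d × d` matrix weight on `J = [0,1)`: entrywise integrable and a.e. positive
semidefinite. -/
structure IsMatrixWeight {d : ℕ} (W : ℝ → Matrix (Fin d) (Fin d) ℂ) : Prop where
  integrable : ∀ i j, IntegrableOn (fun x => W x i j) (Set.Ico (0 : ℝ) 1)
  posSemidef : ∀ᵐ x ∂(volume.restrict (Set.Ico (0 : ℝ) 1)), (W x).PosSemidef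

/-- Membership `f ∈ L²_{ℂ^d}(W)`: `f` is a.e. strongly measurable on `J = [0,1)` and
`∫_J ⟨W f, f⟩ < ∞`. -/
def MemL2W {d : ℕ} (W : ℝ → Matrix (Fin d) (Fin d) ℂ) (f : ℝ → Fin d → ℂ) : Prop :=
  AEStronglyMeasurable f (volume.restrict (Set.Ico (0 : ℝ) 1)) ∧
    IntegrableOn (fun x => qf (W x) (f x)) (Set.Ico (0 : ℝ) 1)

lemma mavg_posSemidef {d : ℕ} {W : ℝ → Matrix (Fin d) (Fin d) ℂ} {I : Set ℝ}
    (hint : ∀ i j, IntegrableOn (fun x => W x i j) I)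
    (hpsd : ∀ᵐ x ∂(volume.restrict I), (W x).PosSemidef) :
    (mavg W I).PosSemidef := by
  have hlen : ((len I : ℂ)⁻¹) = ((((len I)⁻¹ : ℝ)) : ℂ) := by push_cast; ring
  have hstar : star ((len I : ℂ)⁻¹) = (len I : ℂ)⁻¹ := by
    rw [hlen, RCLike.star_def, Complex.conj_ofReal]
  rw [posSemidef_iff_dotProduct_mulVec]
  constructor
  · -- Hermitian
    ext i j
    have hconj : ∫ x in I, (starRingEnd ℂ) (W x j i) = (starRingEnd ℂ) (∫ x in I, W x j i) :=
      integral_conj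
    have he : ∫ x in I, W x i j = ∫ x in I, (starRingEnd ℂ) (W x j i) := by
      refine integral_congr_ae ?_
      filter_upwards [hpsd] with x hx
      exact (congrFun (congrFun hx.1 i) j).symm
    simp only [conjTranspose_apply, mavg, of_apply, star_mul', hstar, RCLike.star_def]
    rw [mul_comm, he, hconj]
    exact mul_comm _ _
  · intro v
    have hexp : ∀ M : Matrix (Fin d) (Fin d) ℂ,
        star v ⬝ᵥ M.mulVec v = ∑ p : Fin d × Fin d, star (v p.1) * (M p.1 p.2 * v p.2) := by
      intro M
      rw [Fintype.sum_prod_type]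
      simp [dotProduct, Matrix.mulVec, Finset.mul_sum]
    have hints : ∀ p : Fin d × Fin d, p ∈ Finset.univ →
        Integrable (fun x => star (v p.1) * (W x p.1 p.2 * v p.2)) (volume.restrict I) :=
      fun p _ => ((hint p.1 p.2).mul_const _).const_mul _
    have hφ : IntegrableOn (fun x => star v ⬝ᵥ (W x).mulVec v) I := by
      rw [IntegrableOn]
      have : (fun x => star v ⬝ᵥ (W x).mulVec v)
          = fun x => ∑ p : Fin d × Fin d, star (v p.1) * (W x p.1 p.2 * v p.2) := by
        funext x; exact hexp (W x)
      rw [this]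
      exact integrable_finset_sum _ hints
    have key : star v ⬝ᵥ (mavg W I).mulVec v
        = (len I : ℂ)⁻¹ * ∫ x in I, star v ⬝ᵥ (W x).mulVec v := by
      simp_rw [hexp, integral_finset_sum _ hints, integral_const_mul, integral_mul_const,
        Finset.mul_sum]
      refine Finset.sum_congr rfl fun p _ => ?_
      simp only [mavg, of_apply]
      ring
    rw [key]
    have hre : 0 ≤ (∫ x in I, star v ⬝ᵥ (W x).mulVec v).re := by
      rw [← RCLike.re_to_complex, ← integral_re hφ]
      refine integral_nonneg_of_ae ?_
      filter_upwards [hpsd] with x hx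
      exact (Complex.nonneg_iff.mp (hx.dotProduct_mulVec_nonneg v)).1
    have him : (∫ x in I, star v ⬝ᵥ (W x).mulVec v).im = 0 := by
      rw [← RCLike.im_to_complex, ← integral_im hφ]
      rw [integral_congr_ae (g := fun _ => (0:ℝ)) ?_, integral_zero]
      filter_upwards [hpsd] with x hx
      exact ((Complex.nonneg_iff.mp (hx.dotProduct_mulVec_nonneg v)).2).symm
    refine mul_nonneg ?_ ?_
    · rw [hlen, Complex.zero_le_real]
      exact inv_nonneg.mpr ENNReal.toReal_nonneg
    · rw [Complex.nonneg_iff]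
      exact ⟨hre, him.symm⟩

lemma psd_diag_re_nonneg {d : ℕ} {M : Matrix (Fin d) (Fin d) ℂ} (h : M.PosSemidef) (i : Fin d) :
    0 ≤ (M i i).re := by
  have h2 := h.dotProduct_mulVec_nonneg (Pi.single i 1)
  simp [dotProduct, Matrix.mulVec, Pi.single_apply, Finset.sum_ite_eq,
    Complex.nonneg_iff] at h2
  exact h2.1

lemma psd_trace_re_nonneg {d : ℕ} {M : Matrix (Fin d) (Fin d) ℂ} (h : M.PosSemidef) :
    0 ≤ (Matrix.trace M).re := by
  rw [Matrix.trace, Complex.re_sum]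
  exact Finset.sum_nonneg fun i _ => psd_diag_re_nonneg h i

lemma mavg_trace {d : ℕ} (V : ℝ → Matrix (Fin d) (Fin d) ℂ) {I : Set ℝ}
    (hV : ∀ i j, IntegrableOn (fun x => V x i j) I) :
    Matrix.trace (mavg V I) = (len I : ℂ)⁻¹ * ∫ x in I, Matrix.trace (V x) := by
  unfold Matrix.trace
  simp only [diag, mavg, of_apply]
  rw [integral_finset_sum _ (fun i _ => hV i i), Finset.mul_sum]

lemma mavg_mul_left_right {d : ℕ} (R R' : Matrix (Fin d) (Fin d) ℂ)
    (W : ℝ → Matrix (Fin d) (Fin d) ℂ) {I : Set ℝ}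
    (hint : ∀ i j, IntegrableOn (fun x => W x i j) I) :
    mavg (fun x => R * W x * R') I = R * mavg W I * R' := by
  ext i j
  simp only [mavg, of_apply, Matrix.mul_apply]
  have h1 : ∀ x : ℝ, (∑ b, (∑ a, R i a * W x a b) * R' b j)
      = ∑ p : Fin d × Fin d, R i p.1 * W x p.1 p.2 * R' p.2 j := by
    intro x
    rw [Fintype.sum_prod_type]
    rw [Finset.sum_comm]
    simp [Finset.sum_mul]
  simp_rw [h1]
  rw [integral_finset_sum _ (fun p _ => by
    simpa [mul_assoc] using ((hint p.1 p.2).const_mul (R i p.1)).mul_const (R' p.2 j))]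
  simp_rw [mul_assoc, integral_const_mul, integral_mul_const, ← mul_assoc]
  rw [Finset.mul_sum, Fintype.sum_prod_type]
  rw [Finset.sum_comm]
  refine Finset.sum_congr rfl fun b _ => ?_
  rw [Finset.sum_mul]
  exact Finset.sum_congr rfl fun a _ => by ring

lemma conj_mul_re (z : ℂ) : ((starRingEnd ℂ) z * z).re = ‖z‖ ^ 2 := by
  rw [mul_comm, Complex.mul_conj]
  simp [Complex.normSq_eq_norm_sq, ← Complex.ofReal_pow]

lemma frob_bound {d : ℕ} (B : Matrix (Fin d) (Fin d) ℂ) (v : EuclideanSpace ℂ (Fin d)) :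
    ‖(Matrix.toEuclideanCLM (𝕜 := ℂ) B) v‖ ^ 2 ≤ (Matrix.trace (Bᴴ * B)).re * ‖v‖ ^ 2 := by
  have happ : ∀ i, ((Matrix.toEuclideanCLM (𝕜 := ℂ) B) v) i = B.mulVec (⇑v) i := by
    intro i
    exact congrFun (Matrix.ofLp_toEuclideanCLM (𝕜 := ℂ) B v) i
  have htr : (Matrix.trace (Bᴴ * B)).re = ∑ i, ∑ j, ‖B i j‖ ^ 2 := by
    rw [Matrix.trace, Complex.re_sum, Finset.sum_comm]
    refine Finset.sum_congr rfl fun i _ => ?_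
    rw [Matrix.diag_apply, Matrix.mul_apply, Complex.re_sum]
    refine Finset.sum_congr rfl fun j _ => ?_
    rw [Matrix.conjTranspose_apply]
    exact conj_mul_re _
  rw [EuclideanSpace.norm_eq, EuclideanSpace.norm_eq,
    Real.sq_sqrt (by positivity), Real.sq_sqrt (by positivity), htr]
  have hrow : ∀ i, ‖((Matrix.toEuclideanCLM (𝕜 := ℂ) B) v) i‖ ^ 2
      ≤ (∑ j, ‖B i j‖ ^ 2) * ∑ j, ‖v j‖ ^ 2 := by
    intro i
    rw [happ i]
    have h1 : ‖B.mulVec (⇑v) i‖ ≤ ∑ j, ‖B i j‖ * ‖v j‖ := by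
      rw [Matrix.mulVec, dotProduct]
      exact (norm_sum_le _ _).trans (le_of_eq (Finset.sum_congr rfl fun j _ => norm_mul _ _))
    calc ‖B.mulVec (⇑v) i‖ ^ 2 ≤ (∑ j, ‖B i j‖ * ‖v j‖) ^ 2 := by
          exact pow_le_pow_left₀ (norm_nonneg _) h1 2
      _ ≤ (∑ j, ‖B i j‖ ^ 2) * ∑ j, ‖v j‖ ^ 2 :=
          Finset.sum_mul_sq_le_sq_mul_sq _ _ _
  calc ∑ i, ‖((Matrix.toEuclideanCLM (𝕜 := ℂ) B) v) i‖ ^ 2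
      ≤ ∑ i, (∑ j, ‖B i j‖ ^ 2) * ∑ j, ‖v j‖ ^ 2 := Finset.sum_le_sum fun i _ => hrow i
    _ = (∑ i, ∑ j, ‖B i j‖ ^ 2) * ∑ j, ‖v j‖ ^ 2 := (Finset.sum_mul _ _ _).symm



lemma mul_mul_apply_expand {d : ℕ} (R M R' : Matrix (Fin d) (Fin d) ℂ) (i j : Fin d) :
    (R * M * R') i j = ∑ p : Fin d × Fin d, R i p.1 * M p.1 p.2 * R' p.2 j := by
  simp only [Matrix.mul_apply]
  rw [Fintype.sum_prod_type, Finset.sum_comm]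
  simp [Finset.sum_mul]

lemma integrableOn_mul_mul {d : ℕ} (R R' : Matrix (Fin d) (Fin d) ℂ)
    (W : ℝ → Matrix (Fin d) (Fin d) ℂ) {I : Set ℝ}
    (hint : ∀ i j, IntegrableOn (fun x => W x i j) I) (i j : Fin d) :
    IntegrableOn (fun x => (R * W x * R') i j) I := by
  have : (fun x => (R * W x * R') i j)
      = fun x => ∑ p : Fin d × Fin d, R i p.1 * W x p.1 p.2 * R' p.2 j :=
    funext fun x => mul_mul_apply_expand R (W x) R' i j
  rw [IntegrableOn, this]
  exact integrable_finset_sum _ fun p _ => by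
    simpa [mul_assoc] using ((hint p.1 p.2).const_mul (R i p.1)).mul_const (R' p.2 j)

lemma integrableOn_trace_mul_mul {d : ℕ} (R R' : Matrix (Fin d) (Fin d) ℂ)
    (W : ℝ → Matrix (Fin d) (Fin d) ℂ) {I : Set ℝ}
    (hint : ∀ i j, IntegrableOn (fun x => W x i j) I) :
    IntegrableOn (fun x => Matrix.trace (R * W x * R')) I := by
  have : (fun x => Matrix.trace (R * W x * R'))
      = fun x => ∑ i, (R * W x * R') i i := by
    funext x; rw [Matrix.trace]; rfl
  rw [IntegrableOn, this]
  exact integrable_finset_sum _ fun i _ => integrableOn_mul_mul R R' W hint i i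

/-- **Packing of the first stopping condition.** If `W` is a matrix weight on `J = [0,1)`
with `⟨W⟩_J` invertible and `{L}` is a collection of pairwise disjoint dyadic subintervals
of `J` with `‖⟨W⟩_L^{1/2} ⟨W⟩_J^{-1/2}‖ > C₁` for each `L`, then
`∑_L |L| ≤ (d / C₁²) |J|`; in particular `∑_L |L| ≤ |J|/4` whenever `C₁² ≥ 4d`. -/
theorem first_stopping_condition_packing (d : ℕ)
    (W : ℝ → Matrix (Fin d) (Fin d) ℂ) (hW : IsMatrixWeight W)
    (hWJ : IsUnit (mavg W (Set.Ico (0 : ℝ) 1)))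
    (C₁ : ℝ) (hC₁ : 0 < C₁)
    (L : Set (Set ℝ)) (hL : ∀ I ∈ L, IsDyadic I) (hdisj : L.PairwiseDisjoint id)
    (hbig : ∀ I ∈ L,
      C₁ < opNorm (msqrt (mavg W I) * (msqrt (mavg W (Set.Ico (0 : ℝ) 1)))⁻¹)) :
    (∑' I : L, volume (I : Set ℝ))
        ≤ ENNReal.ofReal ((d : ℝ) / C₁ ^ 2 * len (Set.Ico (0 : ℝ) 1)) ∧
      (4 * (d : ℝ) ≤ C₁ ^ 2 →
        (∑' I : L, volume (I : Set ℝ)) ≤ volume (Set.Ico (0 : ℝ) 1) / 4) := by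
  classical
  set J : Set ℝ := Set.Ico (0 : ℝ) 1 with hJdef
  have hlenJ : len J = 1 := by simp [len, hJdef, Real.volume_Ico]
  have hAJ : (mavg W J).PosSemidef := mavg_posSemidef hW.integrable hW.posSemidef
  set S : Matrix (Fin d) (Fin d) ℂ := msqrt (mavg W J) with hSdef
  have hSps : S.PosSemidef := (msqrt_spec hAJ).1
  have hSsq : S * S = mavg W J := (msqrt_spec hAJ).2
  have hdetS : IsUnit S.det := by
    have h1 : IsUnit (mavg W J).det := (Matrix.isUnit_iff_isUnit_det _).mp hWJ
    rw [← hSsq, Matrix.det_mul] at h1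
    exact isUnit_of_mul_isUnit_left h1
  set R : Matrix (Fin d) (Fin d) ℂ := S⁻¹ with hRdef
  have hSR : S * R = 1 := Matrix.mul_nonsing_inv S hdetS
  have hRS : R * S = 1 := Matrix.nonsing_inv_mul S hdetS
  have hRherm : R.IsHermitian := hSps.isHermitian.inv
  have hRAR : R * mavg W J * R = 1 := by
    rw [← hSsq, ← Matrix.mul_assoc, Matrix.mul_assoc R S S, ← Matrix.mul_assoc R S,
      hRS, Matrix.one_mul, hSR]
  -- the density function
  set g : ℝ → ℝ := fun x => (Matrix.trace (R * W x * R)).re with hgdef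
  have hgint : IntegrableOn g J := by
    have := (integrableOn_trace_mul_mul R R W hW.integrable).re
    exact this
  have hgnn : ∀ᵐ x ∂(volume.restrict J), 0 ≤ g x := by
    filter_upwards [hW.posSemidef] with x hx
    have h := hx.mul_mul_conjTranspose_same R
    rw [hRherm.eq] at h
    exact psd_trace_re_nonneg h
  have hintJ : ∫ x in J, g x = d := by
    have h1 : Matrix.trace (mavg (fun x => R * W x * R) J)
        = (len J : ℂ)⁻¹ * ∫ x in J, Matrix.trace (R * W x * R) :=
      mavg_trace _ (integrableOn_mul_mul R R W hW.integrable)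
    rw [mavg_mul_left_right R R W hW.integrable, hRAR, hlenJ] at h1
    simp only [Complex.ofReal_one, inv_one, one_mul] at h1
    have h2 : ∫ x in J, g x = (∫ x in J, Matrix.trace (R * W x * R)).re := by
      rw [hgdef]
      have := integral_re (μ := volume.restrict J)
        (f := fun x => Matrix.trace (R * W x * R))
        (integrableOn_trace_mul_mul R R W hW.integrable)
      simpa using this
    rw [h2, ← h1, Matrix.trace_one]
    simp
  -- per interval bound
  have key : ∀ I ∈ L, ENNReal.ofReal (C₁ ^ 2) * volume I ≤ ∫⁻ x in I, ENNReal.ofReal (g x) := by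
    intro I hI
    obtain ⟨n, k, hk, hIeq⟩ := hL I hI
    have hIm : MeasurableSet I := by rw [hIeq]; exact measurableSet_Ico
    have hIJ : I ⊆ J := by
      rw [hIeq, hJdef]
      refine Set.Ico_subset_Ico (by positivity) ?_
      rw [div_le_one (by positivity)]
      have : ((k : ℝ) + 1) ≤ ((2 : ℝ)) ^ n := by
        have := Nat.succ_le_of_lt hk
        exact_mod_cast this
      exact this
    have hdiff : ((k : ℝ) + 1) / 2 ^ n - (k : ℝ) / 2 ^ n = ((2 : ℝ) ^ n)⁻¹ := by
      field_simp
      ring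
    have hvolI : volume I = ENNReal.ofReal (((2 : ℝ) ^ n)⁻¹) := by
      rw [hIeq, dyadicI, Real.volume_Ico, hdiff]
    have hlenI : len I = ((2 : ℝ) ^ n)⁻¹ := by
      rw [len, hvolI, ENNReal.toReal_ofReal (by positivity)]
    have hlenpos : 0 < len I := by rw [hlenI]; positivity
    have hintI : ∀ i j, IntegrableOn (fun x => W x i j) I :=
      fun i j => (hW.integrable i j).mono_set hIJ
    have hpsdI : ∀ᵐ x ∂(volume.restrict I), (W x).PosSemidef :=
      ae_restrict_of_ae_restrict_of_subset hIJ hW.posSemidef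
    have hAI : (mavg W I).PosSemidef := mavg_posSemidef hintI hpsdI
    set SI : Matrix (Fin d) (Fin d) ℂ := msqrt (mavg W I) with hSIdef
    have hSIps : SI.PosSemidef := (msqrt_spec hAI).1
    have hSIsq : SI * SI = mavg W I := (msqrt_spec hAI).2
    set B : Matrix (Fin d) (Fin d) ℂ := SI * R with hBdef
    have hBB : Bᴴ * B = R * mavg W I * R := by
      rw [hBdef, Matrix.conjTranspose_mul, hRherm.eq, hSIps.isHermitian.eq,
        Matrix.mul_assoc, ← Matrix.mul_assoc SI SI R, hSIsq, ← Matrix.mul_assoc]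
    -- find a near-maximizing vector
    have hbigI : C₁ < ‖Matrix.toEuclideanCLM (𝕜 := ℂ) B‖ := hbig I hI
    have hex : ∃ v : EuclideanSpace ℂ (Fin d),
        C₁ * ‖v‖ < ‖(Matrix.toEuclideanCLM (𝕜 := ℂ) B) v‖ := by
      by_contra hcon
      push_neg at hcon
      exact absurd (ContinuousLinearMap.opNorm_le_bound _ hC₁.le fun v => hcon v)
        (not_le.mpr hbigI)
    obtain ⟨v, hv⟩ := hex
    have hvpos : 0 < ‖v‖ := by
      rcases eq_or_lt_of_le (norm_nonneg v) with h | h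
      · exfalso
        have hv0 : v = 0 := by rwa [eq_comm, norm_eq_zero] at h
        rw [hv0] at hv
        simp at hv
      · exact h
    have hC2 : C₁ ^ 2 < (Matrix.trace (R * mavg W I * R)).re := by
      have h2 : (C₁ * ‖v‖) ^ 2 < ‖(Matrix.toEuclideanCLM (𝕜 := ℂ) B) v‖ ^ 2 :=
        pow_lt_pow_left₀ hv (by positivity) (by norm_num)
      have h3 := frob_bound B v
      rw [hBB] at h3
      have h4 : C₁ ^ 2 * ‖v‖ ^ 2 < (Matrix.trace (R * mavg W I * R)).re * ‖v‖ ^ 2 := by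
        calc C₁ ^ 2 * ‖v‖ ^ 2 = (C₁ * ‖v‖) ^ 2 := by ring
          _ < ‖(Matrix.toEuclideanCLM (𝕜 := ℂ) B) v‖ ^ 2 := h2
          _ ≤ _ := h3
      exact lt_of_mul_lt_mul_right h4 (by positivity)
    -- trace identity over I
    have htr : (Matrix.trace (R * mavg W I * R)).re = (len I)⁻¹ * ∫ x in I, g x := by
      have h1 : Matrix.trace (mavg (fun x => R * W x * R) I)
          = (len I : ℂ)⁻¹ * ∫ x in I, Matrix.trace (R * W x * R) :=
        mavg_trace _ (integrableOn_mul_mul R R W hintI)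
      rw [mavg_mul_left_right R R W hintI] at h1
      have h2 : ∫ x in I, g x = (∫ x in I, Matrix.trace (R * W x * R)).re := by
        rw [hgdef]
        have := integral_re (μ := volume.restrict I)
          (f := fun x => Matrix.trace (R * W x * R))
          (integrableOn_trace_mul_mul R R W hintI)
        simpa using this
      rw [h1, h2]
      have : ((len I : ℂ))⁻¹ = (((len I)⁻¹ : ℝ) : ℂ) := by push_cast; ring
      rw [this, Complex.re_ofReal_mul]
    have hC3 : C₁ ^ 2 * len I < ∫ x in I, g x := by
      have := mul_lt_mul_of_pos_right (htr ▸ hC2) hlenpos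
      rwa [mul_comm ((len I)⁻¹) _, mul_assoc, inv_mul_cancel₀ hlenpos.ne', mul_one] at this
    have hgintI : IntegrableOn g I := hgint.mono_set hIJ
    have hgnnI : ∀ᵐ x ∂(volume.restrict I), 0 ≤ g x :=
      ae_restrict_of_ae_restrict_of_subset hIJ hgnn
    calc ENNReal.ofReal (C₁ ^ 2) * volume I
        = ENNReal.ofReal (C₁ ^ 2 * len I) := by
          rw [ENNReal.ofReal_mul (by positivity), hvolI, hlenI]
      _ ≤ ENNReal.ofReal (∫ x in I, g x) := ENNReal.ofReal_le_ofReal hC3.le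
      _ = ∫⁻ x in I, ENNReal.ofReal (g x) :=
          ofReal_integral_eq_lintegral_ofReal hgintI hgnnI
  -- countability
  have hLc : L.Countable := by
    have hsub : L ⊆ Set.range (fun p : ℕ × ℕ => dyadicI p.1 p.2) := by
      intro I hI
      obtain ⟨n, k, _, hIeq⟩ := hL I hI
      exact ⟨(n, k), hIeq.symm⟩
    exact (Set.countable_range _).mono hsub
  haveI : Countable ↥L := hLc.to_subtype
  -- measure with density
  set ν : Measure ℝ := (volume.restrict J).withDensity (fun x => ENNReal.ofReal (g x))
    with hνdef
  have hmeasL : ∀ I : ↥L, MeasurableSet (I : Set ℝ) := by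
    intro I
    obtain ⟨n, k, _, hIeq⟩ := hL I I.2
    rw [hIeq]; exact measurableSet_Ico
  have hsubL : ∀ I : ↥L, (I : Set ℝ) ⊆ J := by
    intro I
    obtain ⟨n, k, hk, hIeq⟩ := hL I I.2
    rw [hIeq, hJdef]
    refine Set.Ico_subset_Ico (by positivity) ?_
    rw [div_le_one (by positivity)]
    have : ((k : ℝ) + 1) ≤ ((2 : ℝ)) ^ n := by exact_mod_cast Nat.succ_le_of_lt hk
    exact this
  have hνI : ∀ I : ↥L, ν (I : Set ℝ) = ∫⁻ x in (I : Set ℝ), ENNReal.ofReal (g x) := by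
    intro I
    rw [hνdef, withDensity_apply _ (hmeasL I), Measure.restrict_restrict (hmeasL I),
      Set.inter_eq_self_of_subset_left (hsubL I)]
  have hmain : ENNReal.ofReal (C₁ ^ 2) * ∑' I : L, volume (I : Set ℝ)
      ≤ ENNReal.ofReal d := by
    calc ENNReal.ofReal (C₁ ^ 2) * ∑' I : L, volume (I : Set ℝ)
        = ∑' I : L, ENNReal.ofReal (C₁ ^ 2) * volume (I : Set ℝ) :=
          ENNReal.tsum_mul_left.symm
      _ ≤ ∑' I : L, ν (I : Set ℝ) := by
          refine ENNReal.tsum_le_tsum fun I => ?_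
          rw [hνI I]
          exact key I I.2
      _ = ν (⋃ I : L, (I : Set ℝ)) := by
          refine (measure_iUnion ?_ hmeasL).symm
          intro I I' hII'
          exact hdisj I.2 I'.2 (fun h => hII' (Subtype.ext h))
      _ ≤ ν Set.univ := measure_mono (Set.subset_univ _)
      _ = ∫⁻ x in J, ENNReal.ofReal (g x) := by
          rw [hνdef, withDensity_apply _ MeasurableSet.univ, Measure.restrict_univ]
      _ = ENNReal.ofReal (∫ x in J, g x) :=
          (ofReal_integral_eq_lintegral_ofReal hgint hgnn).symm
      _ = ENNReal.ofReal d := by rw [hintJ]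
  have hC1sq : (0 : ℝ) < C₁ ^ 2 := by positivity
  have hfirst : (∑' I : L, volume (I : Set ℝ))
      ≤ ENNReal.ofReal ((d : ℝ) / C₁ ^ 2 * len (Set.Ico (0 : ℝ) 1)) := by
    have h1 : (∑' I : L, volume (I : Set ℝ))
        ≤ ENNReal.ofReal d / ENNReal.ofReal (C₁ ^ 2) := by
      rw [ENNReal.le_div_iff_mul_le (Or.inl (ENNReal.ofReal_pos.mpr hC1sq).ne')
        (Or.inl ENNReal.ofReal_ne_top), mul_comm]
      exact hmain
    rw [show len (Set.Ico (0 : ℝ) 1) = 1 from hlenJ, mul_one,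
      ENNReal.ofReal_div_of_pos hC1sq]
    exact h1
  refine ⟨hfirst, fun h4d => ?_⟩
  have hvolJ : volume (Set.Ico (0 : ℝ) 1) = 1 := by
    rw [Real.volume_Ico]; simp
  have hd4 : (d : ℝ) / C₁ ^ 2 ≤ 1 / 4 := by
    rw [div_le_div_iff₀ hC1sq (by norm_num)]
    linarith
  calc (∑' I : L, volume (I : Set ℝ))
      ≤ ENNReal.ofReal ((d : ℝ) / C₁ ^ 2 * len (Set.Ico (0 : ℝ) 1)) := hfirst
    _ ≤ ENNReal.ofReal (1 / 4) := by
        rw [show len (Set.Ico (0 : ℝ) 1) = 1 from hlenJ, mul_one]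
        exact ENNReal.ofReal_le_ofReal hd4
    _ = volume (Set.Ico (0 : ℝ) 1) / 4 := by
        rw [hvolJ, ENNReal.ofReal_div_of_pos (by norm_num)]
        simp
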